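/- For the Beta prime density f_{a,b}(x) = Γ(a+b)/(Γ(a)Γ(b))·x^{a-1}(1+x)^{-(a+b)} on (0,∞) with 0 < a < 1/2 and b > 0, and the induced density of β where β | z ~ N(0, z) and z ~ f_{a,b}: the marginal density of β at any x with 0 < |x| ≤ E satisfies a lower bound of the form C·a·(x²)^{a - 1/2}·(x² + const)^{-(b+1/2)} for a constant C depending only on b; consequently -log(inf_{0<|x|≤E} marginal(x)) ≤ C'·((1/2 - a)·log(1/x²-term) + (b+1/2)·log(E² + const)) = O(log E + log(1/a)). -/

import Mathlib

open Real MeasureTheory Set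

set_option linter.unusedVariables false
set_option linter.deprecated false

lemma stmt17_meas (a b x R : ℝ) :
    Measurable (fun z : ℝ => Real.exp (-(x ^ 2) / (2 * z)) / Real.sqrt (2 * Real.pi * z) *
      (R * z ^ (a - 1) * (1 + z) ^ (-(a + b)))) := by
  apply Measurable.mul
  · apply Measurable.div
    · exact (measurable_const.div (measurable_const.mul measurable_id)).exp
    · exact (measurable_const.mul measurable_id).sqrt
  · apply Measurable.mul
    · exact measurable_const.mul (measurable_id.pow_const _)
    · exact (measurable_const.add measurable_id).pow_const _

lemma stmt17_nonneg (a b x R : ℝ) (hR : 0 ≤ R) (z : ℝ) (hz : 0 < z) :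
    0 ≤ Real.exp (-(x ^ 2) / (2 * z)) / Real.sqrt (2 * Real.pi * z) *
      (R * z ^ (a - 1) * (1 + z) ^ (-(a + b))) :=
  mul_nonneg (div_nonneg (Real.exp_pos _).le (Real.sqrt_nonneg _))
    (mul_nonneg (mul_nonneg hR (Real.rpow_nonneg hz.le _)) (Real.rpow_nonneg (by linarith) _))

lemma stmt17_integrable (a b x R : ℝ) (ha : 0 < a) (ha2 : a < 1/2) (hb : 0 < b)
    (hx : x ≠ 0) (hR : 0 ≤ R) :
    IntegrableOn (fun z : ℝ => Real.exp (-(x ^ 2) / (2 * z)) / Real.sqrt (2 * Real.pi * z) *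
      (R * z ^ (a - 1) * (1 + z) ^ (-(a + b)))) (Ioi (0:ℝ)) := by
  set f : ℝ → ℝ := fun z : ℝ => Real.exp (-(x ^ 2) / (2 * z)) / Real.sqrt (2 * Real.pi * z) *
      (R * z ^ (a - 1) * (1 + z) ^ (-(a + b))) with hf
  have hmeas := stmt17_meas a b x R
  set c : ℝ := x ^ 2 / 2 with hc
  have hcpos : 0 < c := by rw [hc]; positivity
  have h1 : IntegrableOn f (Ioc (0:ℝ) 1) := by
    apply Integrable.mono' (g := fun z => (R * 4 / c ^ 2 / Real.sqrt (2 * Real.pi)) * z ^ (a + 1/2))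
    · exact ((intervalIntegral.intervalIntegrable_rpow' (a := 0) (b := 1)
        (by linarith)).1.const_mul _)
    · exact hmeas.aestronglyMeasurable
    · rw [ae_restrict_iff' measurableSet_Ioc]
      filter_upwards with z hz
      obtain ⟨hz0, hz1⟩ := hz
      rw [Real.norm_eq_abs, abs_of_nonneg (stmt17_nonneg a b x R hR z hz0)]
      have hexp : Real.exp (-(x ^ 2) / (2 * z)) ≤ 4 / c ^ 2 * z ^ (2:ℝ) := by
        have e1 : Real.exp (-(x ^ 2) / (2 * z)) = (Real.exp (c / z))⁻¹ := by
          rw [← Real.exp_neg]; congr 1; rw [hc]; field_simp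
        have e2 : (c / (2 * z)) ^ 2 ≤ Real.exp (c / z) := by
          have h := Real.add_one_le_exp (c / (2 * z))
          have h2 : Real.exp (c / (2 * z)) ^ 2 = Real.exp (c / z) := by
            rw [sq, ← Real.exp_add]; congr 1; field_simp; ring
          nlinarith [Real.exp_pos (c / (2 * z)),
            div_nonneg hcpos.le (by linarith : (0:ℝ) ≤ 2 * z)]
        rw [e1]
        calc (Real.exp (c / z))⁻¹ ≤ ((c / (2 * z)) ^ 2)⁻¹ := by
              apply inv_anti₀ (by positivity) e2
          _ = 4 / c ^ 2 * z ^ (2:ℝ) := by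
              rw [Real.rpow_two]; field_simp; ring
      have hsqrt : Real.sqrt (2 * Real.pi * z) = Real.sqrt (2 * Real.pi) * z ^ ((1:ℝ)/2) := by
        rw [Real.sqrt_mul (by positivity) z, Real.sqrt_eq_rpow, Real.sqrt_eq_rpow]
      have h1z : (1 + z) ^ (-(a + b)) ≤ 1 :=
        Real.rpow_le_one_of_one_le_of_nonpos (by linarith) (by linarith)
      have hBnn : 0 ≤ R * z ^ (a - 1) := mul_nonneg hR (Real.rpow_nonneg hz0.le _)
      have step1 : f z ≤ (4 / c ^ 2 * z ^ (2:ℝ)) / (Real.sqrt (2 * Real.pi) * z ^ ((1:ℝ)/2)) *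
          (R * z ^ (a - 1) * 1) := by
        rw [hf]; simp only; rw [hsqrt]
        apply mul_le_mul
        · gcongr
        · exact mul_le_mul_of_nonneg_left h1z hBnn
        · exact mul_nonneg hBnn (Real.rpow_nonneg (by linarith) _)
        · exact div_nonneg (mul_nonneg (by positivity) (Real.rpow_nonneg hz0.le _))
            (mul_nonneg (Real.sqrt_nonneg _) (Real.rpow_nonneg hz0.le _))
      have hx1 : z ^ (2:ℝ) / z ^ ((1:ℝ)/2) * z ^ (a - 1) = z ^ (a + 1/2) := by
        rw [← Real.rpow_sub hz0, ← Real.rpow_add hz0]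
        congr 1; ring
      have step2 : (4 / c ^ 2 * z ^ (2:ℝ)) / (Real.sqrt (2 * Real.pi) * z ^ ((1:ℝ)/2)) *
          (R * z ^ (a - 1) * 1) = (R * 4 / c ^ 2 / Real.sqrt (2 * Real.pi)) * z ^ (a + 1/2) := by
        rw [← hx1]; ring
      exact step1.trans_eq step2
  have h2 : IntegrableOn f (Ioi (1:ℝ)) := by
    apply Integrable.mono' (g := fun z => (R / Real.sqrt (2 * Real.pi)) * z ^ (-(3/2) - b))
    · exact (integrableOn_Ioi_rpow_of_lt (by linarith) one_pos).const_mul _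
    · exact hmeas.aestronglyMeasurable
    · rw [ae_restrict_iff' measurableSet_Ioi]
      filter_upwards with z hz
      have hz0 : (0:ℝ) < z := lt_trans one_pos hz
      rw [Real.norm_eq_abs, abs_of_nonneg (stmt17_nonneg a b x R hR z hz0)]
      have hexp : Real.exp (-(x ^ 2) / (2 * z)) ≤ 1 := by
        rw [Real.exp_le_one_iff]
        apply div_nonpos_of_nonpos_of_nonneg (neg_nonpos.mpr (by positivity)) (by linarith)
      have hsqrt : Real.sqrt (2 * Real.pi * z) = Real.sqrt (2 * Real.pi) * z ^ ((1:ℝ)/2) := by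
        rw [Real.sqrt_mul (by positivity) z, Real.sqrt_eq_rpow, Real.sqrt_eq_rpow]
      have h1z : (1 + z) ^ (-(a + b)) ≤ z ^ (-(a + b)) :=
        Real.rpow_le_rpow_of_nonpos hz0 (by linarith) (by linarith)
      have hBnn : 0 ≤ R * z ^ (a - 1) := mul_nonneg hR (Real.rpow_nonneg hz0.le _)
      have step1 : f z ≤ 1 / (Real.sqrt (2 * Real.pi) * z ^ ((1:ℝ)/2)) *
          (R * z ^ (a - 1) * z ^ (-(a + b))) := by
        rw [hf]; simp only; rw [hsqrt]
        apply mul_le_mul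
        · gcongr
        · exact mul_le_mul_of_nonneg_left h1z hBnn
        · exact mul_nonneg hBnn (Real.rpow_nonneg (by linarith) _)
        · exact div_nonneg zero_le_one
            (mul_nonneg (Real.sqrt_nonneg _) (Real.rpow_nonneg hz0.le _))
      have hx1 : z ^ (a - 1) * z ^ (-(a + b)) / z ^ ((1:ℝ)/2) = z ^ (-(3/2) - b) := by
        rw [← Real.rpow_add hz0, ← Real.rpow_sub hz0]
        congr 1; ring
      have step2 : 1 / (Real.sqrt (2 * Real.pi) * z ^ ((1:ℝ)/2)) *
          (R * z ^ (a - 1) * z ^ (-(a + b))) =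
          (R / Real.sqrt (2 * Real.pi)) * z ^ (-(3/2) - b) := by
        rw [← hx1]; ring
      exact step1.trans_eq step2
  have : Ioi (0:ℝ) = Ioc (0:ℝ) 1 ∪ Ioi 1 := (Ioc_union_Ioi_eq_Ioi zero_le_one).symm
  rw [this]
  exact h1.union h2

lemma stmt17_lower (a b x γ M : ℝ) (ha : 0 < a) (ha2 : a < 1/2) (hb : 0 < b) (hx : x ≠ 0)
    (hγ : 0 < γ) (hM : 0 < M)
    (hγle : γ ≤ Real.Gamma (a + b)) (hMge : Real.Gamma (a + 1) ≤ M) :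
    Real.exp (-2) * 2 ^ ((1:ℝ) + b) * γ / (4 * Real.sqrt Real.pi * M * Real.Gamma b) * a *
      (x ^ 2) ^ (a - 1/2) * (x ^ 2 + 2) ^ (-(b + 1/2)) ≤
    ∫ z in Ioi (0:ℝ), Real.exp (-(x ^ 2) / (2 * z)) / Real.sqrt (2 * Real.pi * z) *
      (Real.Gamma (a + b) / (Real.Gamma a * Real.Gamma b) * z ^ (a - 1) * (1 + z) ^ (-(a + b))) := by
  have hGb : 0 < Real.Gamma b := Real.Gamma_pos_of_pos hb
  have hGa : 0 < Real.Gamma a := Real.Gamma_pos_of_pos ha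
  have hGab : 0 < Real.Gamma (a + b) := Real.Gamma_pos_of_pos (by linarith)
  set R : ℝ := Real.Gamma (a + b) / (Real.Gamma a * Real.Gamma b) with hRdef
  have hRpos : 0 < R := div_pos hGab (mul_pos hGa hGb)
  set t : ℝ := x ^ 2 with htdef
  have ht : 0 < t := by rw [htdef]; positivity
  set f : ℝ → ℝ := fun z : ℝ => Real.exp (-t / (2 * z)) / Real.sqrt (2 * Real.pi * z) *
      (R * z ^ (a - 1) * (1 + z) ^ (-(a + b))) with hfdef
  set κ : ℝ := Real.exp (-2) / (Real.sqrt Real.pi * Real.sqrt t) *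
      (R * (t/2) ^ (a - 1) * (1 + t/2) ^ (-(a + b))) with hκdef
  have hsub : Ioc (t/4) (t/2) ⊆ Ioi (0:ℝ) := fun z hz => lt_trans (by linarith) hz.1
  have hint : IntegrableOn f (Ioi (0:ℝ)) := stmt17_integrable a b x R ha ha2 hb hx hRpos.le
  have hnn : ∀ z ∈ Ioi (0:ℝ), 0 ≤ f z := fun z hz => stmt17_nonneg a b x R hRpos.le z hz
  have mono1 : ∫ z in Ioc (t/4) (t/2), f z ≤ ∫ z in Ioi (0:ℝ), f z := by
    apply setIntegral_mono_set hint
    · filter_upwards [ae_restrict_mem measurableSet_Ioi] with z hz using hnn z hz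
    · exact HasSubset.Subset.eventuallyLE hsub
  have point : ∀ z ∈ Ioc (t/4) (t/2), κ ≤ f z := by
    intro z hz
    have hz0 : 0 < z := lt_trans (by linarith) hz.1
    have hz1 : t / 4 < z := hz.1
    have hz2 : z ≤ t / 2 := hz.2
    rw [hκdef, hfdef]
    simp only
    have hexp : Real.exp (-2) ≤ Real.exp (-t / (2 * z)) := by
      apply Real.exp_le_exp.mpr
      rw [neg_div]
      have : t / (2 * z) ≤ 2 := by
        rw [div_le_iff₀ (by linarith : (0:ℝ) < 2 * z)]; linarith
      linarith
    have hsq : Real.sqrt (2 * Real.pi * z) ≤ Real.sqrt Real.pi * Real.sqrt t := by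
      rw [← Real.sqrt_mul Real.pi_pos.le]
      apply Real.sqrt_le_sqrt
      nlinarith [Real.pi_pos]
    apply mul_le_mul
    · exact div_le_div₀ (Real.exp_pos _).le hexp
        (Real.sqrt_pos.mpr (by positivity)) hsq
    · apply mul_le_mul
      · exact mul_le_mul_of_nonneg_left
          (Real.rpow_le_rpow_of_nonpos hz0 hz2 (by linarith)) hRpos.le
      · exact Real.rpow_le_rpow_of_nonpos (by linarith) (by linarith) (by linarith)
      · exact Real.rpow_nonneg (by linarith) _
      · exact mul_nonneg hRpos.le (Real.rpow_nonneg hz0.le _)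
    · exact mul_nonneg (mul_nonneg hRpos.le (Real.rpow_nonneg (by positivity) _))
        (Real.rpow_nonneg (by positivity) _)
    · exact div_nonneg (Real.exp_pos _).le (Real.sqrt_nonneg _)
  have mono2 : ∫ _z in Ioc (t/4) (t/2), κ ≤ ∫ z in Ioc (t/4) (t/2), f z := by
    apply setIntegral_mono_on
    · exact integrableOn_const (by rw [Real.volume_Ioc]; exact ENNReal.ofReal_ne_top)
    · exact hint.mono_set hsub
    · exact measurableSet_Ioc
    · exact point
  have eval : ∫ _z in Ioc (t/4) (t/2), κ = t/4 * κ := by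
    rw [setIntegral_const, Real.volume_real_Ioc_of_le (by linarith), smul_eq_mul]
    congr 1; ring
  -- algebra
  have hst : Real.sqrt t = t ^ ((1:ℝ)/2) := Real.sqrt_eq_rpow t
  have h2 : (t/2) ^ (a - 1) = t ^ (a - 1) * 2 ^ ((1:ℝ) - a) := by
    rw [Real.div_rpow ht.le (by norm_num : (0:ℝ) ≤ 2), div_eq_mul_inv]
    congr 1
    rw [← Real.rpow_neg (by norm_num : (0:ℝ) ≤ 2)]
    congr 1; ring
  have h3 : (1 + t/2) ^ (-(a + b)) = (t + 2) ^ (-(a + b)) * 2 ^ (a + b) := by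
    rw [show (1 + t/2 : ℝ) = (t + 2)/2 by ring,
      Real.div_rpow (by linarith) (by norm_num : (0:ℝ) ≤ 2), div_eq_mul_inv]
    congr 1
    rw [← Real.rpow_neg (by norm_num : (0:ℝ) ≤ 2), neg_neg]
  have h4 : t * t ^ (a - 1) / t ^ ((1:ℝ)/2) = t ^ (a - 1/2) := by
    rw [div_eq_iff (by positivity : t ^ ((1:ℝ)/2) ≠ 0)]
    nth_rewrite 1 [← Real.rpow_one t]
    rw [← Real.rpow_add ht, ← Real.rpow_add ht]
    congr 1; ring
  have h5 : (2:ℝ) ^ ((1:ℝ) - a) * 2 ^ (a + b) = 2 ^ ((1:ℝ) + b) := by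
    rw [← Real.rpow_add two_pos]; congr 1; ring
  have hRlow : a * (γ / (M * Real.Gamma b)) ≤ R := by
    have hGa1 : Real.Gamma (a + 1) = a * Real.Gamma a := Real.Gamma_add_one ha.ne'
    have hGa1pos : 0 < Real.Gamma (a + 1) := Real.Gamma_pos_of_pos (by linarith)
    calc a * (γ / (M * Real.Gamma b)) = a * γ / (M * Real.Gamma b) := by ring
      _ ≤ a * Real.Gamma (a + b) / (Real.Gamma (a + 1) * Real.Gamma b) := by
          apply div_le_div₀ (by positivity) (mul_le_mul_of_nonneg_left hγle ha.le)
            (by positivity) (mul_le_mul_of_nonneg_right hMge hGb.le)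
      _ = R := by
          rw [hRdef, hGa1]; field_simp
  have halg : Real.exp (-2) * 2 ^ ((1:ℝ) + b) * γ / (4 * Real.sqrt Real.pi * M * Real.Gamma b)
      * a * t ^ (a - 1/2) * (t + 2) ^ (-(b + 1/2)) ≤ t/4 * κ := by
    have hexpand : t/4 * κ = (Real.exp (-2) * (2 ^ ((1:ℝ) - a) * 2 ^ (a + b)) /
        (4 * Real.sqrt Real.pi)) * R * (t * t ^ (a - 1) / t ^ ((1:ℝ)/2)) *
        (t + 2) ^ (-(a + b)) := by
      rw [hκdef, h2, h3, hst]; ring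
    rw [hexpand, h4, h5]
    have hc0 : (0:ℝ) ≤ Real.exp (-2) * 2 ^ ((1:ℝ) + b) / (4 * Real.sqrt Real.pi) := by positivity
    have e1 : Real.exp (-2) * 2 ^ ((1:ℝ) + b) * γ / (4 * Real.sqrt Real.pi * M * Real.Gamma b)
        * a = (Real.exp (-2) * 2 ^ ((1:ℝ) + b) / (4 * Real.sqrt Real.pi)) *
        (a * (γ / (M * Real.Gamma b))) := by ring
    rw [e1]
    apply mul_le_mul
    · apply mul_le_mul_of_nonneg_right (mul_le_mul_of_nonneg_left hRlow hc0)
        (Real.rpow_nonneg ht.le _)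
    · exact Real.rpow_le_rpow_of_exponent_le (by linarith) (by linarith)
    · exact Real.rpow_nonneg (by linarith) _
    · exact mul_nonneg (mul_nonneg hc0 hRpos.le) (Real.rpow_nonneg ht.le _)
  calc Real.exp (-2) * 2 ^ ((1:ℝ) + b) * γ / (4 * Real.sqrt Real.pi * M * Real.Gamma b) * a *
      t ^ (a - 1/2) * (t + 2) ^ (-(b + 1/2)) ≤ t/4 * κ := halg
    _ = ∫ _z in Ioc (t/4) (t/2), κ := eval.symm
    _ ≤ ∫ z in Ioc (t/4) (t/2), f z := mono2
    _ ≤ ∫ z in Ioi (0:ℝ), f z := mono1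




/-- Lower bound for the Gaussian mixture of a Beta prime mixing density with
`0 < a < 1/2`: the marginal density `m` satisfies
`m(x) ≥ C a (x²)^{a-1/2} (x² + K)^{-(b+1/2)}` for `0 < |x| ≤ E` with constants
depending only on `b`; consequently
`-log(inf_{0<|x|≤E} m(x)) = O(log E + log(1/a))`. -/
theorem stmt17 (b : ℝ) (hb : 0 < b) :
    ∃ C > 0, ∃ K > 0, ∃ C' > 0,
      ∀ a : ℝ, 0 < a → a < 1/2 →
        let m : ℝ → ℝ := fun x => ∫ z in Set.Ioi (0:ℝ),
          Real.exp (-(x ^ 2) / (2 * z)) / Real.sqrt (2 * Real.pi * z) *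
            (Real.Gamma (a + b) / (Real.Gamma a * Real.Gamma b) *
              z ^ (a - 1) * (1 + z) ^ (-(a + b)))
        (∀ E : ℝ, ∀ x : ℝ, 0 < |x| → |x| ≤ E →
          C * a * (x ^ 2) ^ (a - 1/2) * (x ^ 2 + K) ^ (-(b + 1/2)) ≤ m x) ∧
        (∀ E : ℝ, 2 ≤ E →
          -Real.log (sInf (m '' {x | 0 < |x| ∧ |x| ≤ E}))
            ≤ C' * (Real.log E + Real.log (1 / a) + 1)) := by
  -- min of Gamma on [b, b+1/2], max of Gamma on [1, 3/2]
  have hcont1 : ContinuousOn Real.Gamma (Icc b (b + 1/2)) := by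
    intro s hs
    have hs0 : 0 < s := lt_of_lt_of_le hb hs.1
    exact (Real.differentiableAt_Gamma (fun m => by
      have : -(m:ℝ) ≤ 0 := neg_nonpos.mpr (Nat.cast_nonneg m)
      linarith)).continuousAt.continuousWithinAt
  have hcont2 : ContinuousOn Real.Gamma (Icc (1:ℝ) (3/2)) := by
    intro s hs
    have hs0 : (0:ℝ) < s := lt_of_lt_of_le one_pos hs.1
    exact (Real.differentiableAt_Gamma (fun m => by
      have : -(m:ℝ) ≤ 0 := neg_nonpos.mpr (Nat.cast_nonneg m)
      linarith)).continuousAt.continuousWithinAt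
  obtain ⟨z₀, hz₀m, hz₀⟩ := isCompact_Icc.exists_isMinOn
    ⟨b, left_mem_Icc.mpr (by linarith)⟩ hcont1
  obtain ⟨z₁, hz₁m, hz₁⟩ := isCompact_Icc.exists_isMaxOn
    ⟨1, left_mem_Icc.mpr (by norm_num)⟩ hcont2
  set γ : ℝ := Real.Gamma z₀ with hγdef
  set M : ℝ := Real.Gamma z₁ with hMdef
  have hγ : 0 < γ := Real.Gamma_pos_of_pos (lt_of_lt_of_le hb hz₀m.1)
  have hM : 0 < M := Real.Gamma_pos_of_pos (lt_of_lt_of_le one_pos hz₁m.1)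
  have hGb : 0 < Real.Gamma b := Real.Gamma_pos_of_pos hb
  set C : ℝ := Real.exp (-2) * 2 ^ ((1:ℝ) + b) * γ / (4 * Real.sqrt Real.pi * M * Real.Gamma b)
    with hCdef
  have hC : 0 < C := by
    apply div_pos
    · have : (0:ℝ) < 2 ^ ((1:ℝ) + b) := Real.rpow_pos_of_pos two_pos _
      positivity
    · have : (0:ℝ) < Real.sqrt Real.pi := Real.sqrt_pos.mpr Real.pi_pos
      positivity
  set C' : ℝ := |Real.log C| + 3 * (b + 1/2) + 2 with hC'def
  have hC' : 0 < C' := by positivity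
  refine ⟨C, hC, 2, two_pos, C', hC', ?_⟩
  intro a ha ha2 m
  have hA : ∀ x : ℝ, x ≠ 0 →
      C * a * (x ^ 2) ^ (a - 1/2) * (x ^ 2 + 2) ^ (-(b + 1/2)) ≤ m x := by
    intro x hx
    have hγle : γ ≤ Real.Gamma (a + b) :=
      hz₀ (show a + b ∈ Icc b (b + 1/2) from ⟨by linarith, by linarith⟩)
    have hMge : Real.Gamma (a + 1) ≤ M :=
      hz₁ (show a + 1 ∈ Icc (1:ℝ) (3/2) from ⟨by linarith, by linarith⟩)
    exact stmt17_lower a b x γ M ha ha2 hb hx hγ hM hγle hMge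
  constructor
  · intro E x hx _
    exact hA x (abs_pos.mp hx)
  · intro E hE
    have hE1 : (1:ℝ) < E := lt_of_lt_of_le one_lt_two hE
    set S : Set ℝ := {x | 0 < |x| ∧ |x| ≤ E} with hSdef
    have hSne : S.Nonempty := ⟨1, by simp [hSdef]; linarith⟩
    set L : ℝ := C * a * (E ^ 2) ^ (a - 1/2) * (E ^ 2 + 2) ^ (-(b + 1/2)) with hLdef
    have hE2 : (0:ℝ) < E ^ 2 := by positivity
    have hLpos : 0 < L := by
      apply mul_pos (mul_pos (mul_pos hC ha) (Real.rpow_pos_of_pos hE2 _))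
        (Real.rpow_pos_of_pos (by positivity) _)
    have hlb : ∀ y ∈ m '' S, L ≤ y := by
      rintro y ⟨x, ⟨hx1, hx2⟩, rfl⟩
      have hx0 : x ≠ 0 := abs_pos.mp hx1
      have hx2' : x ^ 2 ≤ E ^ 2 := by nlinarith [sq_abs x, abs_nonneg x]
      have hxpos : (0:ℝ) < x ^ 2 := by positivity
      calc L ≤ C * a * (x ^ 2) ^ (a - 1/2) * (x ^ 2 + 2) ^ (-(b + 1/2)) := by
            rw [hLdef]
            apply mul_le_mul
            · exact mul_le_mul_of_nonneg_left
                (Real.rpow_le_rpow_of_nonpos hxpos hx2' (by linarith)) (mul_pos hC ha).le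
            · exact Real.rpow_le_rpow_of_nonpos (by positivity) (by linarith) (by linarith)
            · exact Real.rpow_nonneg (by positivity) _
            · exact mul_nonneg (mul_pos hC ha).le (Real.rpow_nonneg hxpos.le _)
        _ ≤ m x := hA x hx0
    have hsInf : L ≤ sInf (m '' S) := le_csInf (hSne.image m) hlb
    have hlog : Real.log L ≤ Real.log (sInf (m '' S)) := Real.log_le_log hLpos hsInf
    have hlogE : 0 ≤ Real.log E := Real.log_nonneg (by linarith)
    have hloga : 0 ≤ -Real.log a := by
      have := Real.log_nonpos ha.le (by linarith : a ≤ 1); linarith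
    have hlogL : Real.log L = Real.log C + Real.log a + (a - 1/2) * Real.log (E ^ 2) +
        (-(b + 1/2)) * Real.log (E ^ 2 + 2) := by
      rw [hLdef, Real.log_mul (by positivity) (ne_of_gt (Real.rpow_pos_of_pos (by positivity) _)),
        Real.log_mul (by positivity) (ne_of_gt (Real.rpow_pos_of_pos hE2 _)),
        Real.log_mul hC.ne' ha.ne', Real.log_rpow hE2, Real.log_rpow (by positivity)]
    have hlogE2 : Real.log (E ^ 2) = 2 * Real.log E := by
      rw [Real.log_pow]; norm_num
    have hlogE3 : Real.log (E ^ 2 + 2) ≤ 3 * Real.log E := by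
      have h1 : E ^ 2 + 2 ≤ E ^ 3 := by nlinarith
      calc Real.log (E ^ 2 + 2) ≤ Real.log (E ^ 3) := Real.log_le_log (by positivity) h1
        _ = 3 * Real.log E := by rw [Real.log_pow]; norm_num
    have h1a : Real.log (1 / a) = -Real.log a := by rw [one_div, Real.log_inv]
    have hclog : -Real.log C ≤ |Real.log C| := neg_le_abs _
    have final : -Real.log L ≤ C' * (Real.log E + Real.log (1 / a) + 1) := by
      rw [hlogL, hlogE2, h1a, hC'def]
      nlinarith [hlogE3, hlogE, hloga, hclog, abs_nonneg (Real.log C),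
        mul_nonneg hloga hlogE]
    calc -Real.log (sInf (m '' S)) ≤ -Real.log L := neg_le_neg hlog
      _ ≤ C' * (Real.log E + Real.log (1 / a) + 1) := final
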